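/- arXiv:1801.02745 — 2 statements merged into one kernel-verified Lean document; each statement's English description precedes it below -/
import Mathlib

section
/- Let λ ≥ 0 and 0 ≤ δ ≤ 1. Then the Poisson distribution with mean λ satisfies Pr[ |Poi(λ) − λ| ≤ δλ ] ≥ 1 − 2·exp(−δ²·λ/4); that is, Σ_{y∈ℕ : |y−λ| ≤ δλ} e^{−λ}·λ^y / y! ≥ 1 − 2·exp(−δ²·λ/4). -/
/-- The pmf of the Poisson distribution with mean `l`. -/
noncomputable def poissonPMF (l : ℝ) (y : ℕ) : ℝ := Real.exp (-l) * l ^ y / Nat.factorial y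

private lemma hasSum_aux (l c : ℝ) :
    HasSum (fun y : ℕ => Real.exp (-l) * c ^ y / (Nat.factorial y)) (Real.exp (c - l)) := by
  have h := NormedSpace.expSeries_div_hasSum_exp c
  rw [← Real.exp_eq_exp_ℝ] at h
  have h2 := h.mul_left (Real.exp (-l))
  have hre : Real.exp (-l) * Real.exp c = Real.exp (c - l) := by
    rw [← Real.exp_add]; ring_nf
  simpa [mul_div_assoc, hre] using h2

private lemma lemA {x : ℝ} (h0 : 0 ≤ x) (h1 : x ≤ 1) : x / 2 ≤ Real.log (1 + x) := by
  rw [Real.le_log_iff_exp_le (by linarith)]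
  have h2 : 1 - x / 2 ≤ Real.exp (-(x / 2)) := by
    have := Real.add_one_le_exp (-(x / 2)); linarith
  have h3 : (0 : ℝ) < 1 - x / 2 := by linarith
  have h4 : Real.exp (x / 2) * Real.exp (-(x / 2)) = 1 := by
    rw [← Real.exp_add]; simp
  nlinarith [Real.exp_pos (x / 2), mul_le_mul_of_nonneg_left h2 (Real.exp_pos (x / 2)).le]

private lemma lemB {x : ℝ} (h0 : 0 ≤ x) (h1 : x ≤ 1) :
    x + x ^ 2 / 4 ≤ (1 + x) * Real.log (1 + x) := by
  set F : ℝ → ℝ := fun t => (1 + t) * Real.log (1 + t) - t - t ^ 2 / 4 with hF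
  have hd : ∀ t : ℝ, 0 ≤ t → HasDerivAt F (Real.log (1 + t) - t / 2) t := by
    intro t ht
    have h1t : (0 : ℝ) < 1 + t := by linarith
    have hlog : HasDerivAt (fun s : ℝ => Real.log (1 + s)) (1 / (1 + t)) t := by
      have h := (Real.hasDerivAt_log (ne_of_gt h1t)).comp t
        ((hasDerivAt_id t).const_add 1)
      exact h.congr_deriv (by simp [one_div])
    have hmul : HasDerivAt (fun s : ℝ => (1 + s) * Real.log (1 + s))
        (1 * Real.log (1 + t) + (1 + t) * (1 / (1 + t))) t :=
      ((hasDerivAt_id t).const_add 1).mul hlog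
    have hpow : HasDerivAt (fun s : ℝ => s ^ 2 / 4) ((2 * t ^ 1) / 4) t :=
      (hasDerivAt_pow 2 t).div_const 4
    have := (hmul.sub (hasDerivAt_id t)).sub hpow
    refine this.congr_deriv ?_
    rw [mul_one_div_cancel h1t.ne']
    ring
  have mono : MonotoneOn F (Set.Icc (0 : ℝ) 1) := by
    apply monotoneOn_of_deriv_nonneg (convex_Icc 0 1)
    · intro t ht
      exact (hd t ht.1).continuousAt.continuousWithinAt
    · intro t ht
      rw [interior_Icc] at ht
      exact (hd t ht.1.le).differentiableAt.differentiableWithinAt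
    · intro t ht
      rw [interior_Icc] at ht
      rw [(hd t ht.1.le).deriv]
      have := lemA ht.1.le ht.2.le
      linarith
  have h00 : F 0 = 0 := by simp [hF]
  have := mono (Set.mem_Icc.mpr ⟨le_refl 0, by norm_num⟩) (Set.mem_Icc.mpr ⟨h0, h1⟩) h0
  rw [h00] at this
  simp only [hF] at this
  linarith

private lemma lemC {x : ℝ} (h0 : 0 ≤ x) (h1 : x ≤ 1) :
    (1 - x) * (-(Real.log (1 - x))) ≤ x - x ^ 2 / 4 := by
  rcases h1.eq_or_lt with rfl | hlt
  · norm_num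
  · have hx : (0 : ℝ) < 1 - x := by linarith
    set u := -Real.log (1 - x) with hu
    have hu0 : 0 ≤ u := by
      have h := Real.log_nonpos (x := 1 - x) (by linarith) (by linarith)
      simp only [hu]; linarith
    have he : Real.exp (-u) = 1 - x := by
      simp only [hu, neg_neg]
      exact Real.exp_log hx
    have hsinh : u ≤ Real.sinh u := Real.self_le_sinh_iff.2 hu0
    rw [Real.sinh_eq] at hsinh
    have heu : Real.exp u * Real.exp (-u) = 1 := by rw [← Real.exp_add]; simp
    nlinarith [mul_le_mul_of_nonneg_left hsinh hx.le, Real.exp_pos u, sq_nonneg x]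

/-- For `λ ≥ 0` and `0 ≤ δ ≤ 1`, `Pr[|Poi(λ) − λ| ≤ δλ] ≥ 1 − 2·exp(−δ²·λ/4)`. -/
theorem stmt12 (l δ : ℝ) (hl : 0 ≤ l) (hδ : δ ∈ Set.Icc (0 : ℝ) 1) :
    1 - 2 * Real.exp (-(δ ^ 2 * l / 4)) ≤
      ∑' y : {y : ℕ // |(y : ℝ) - l| ≤ δ * l}, poissonPMF l y := by
  obtain ⟨hδ0, hδ1⟩ := hδ
  set E := Real.exp (-(δ ^ 2 * l / 4)) with hE
  have hp : HasSum (poissonPMF l) 1 := by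
    have := hasSum_aux l l
    simp only [sub_self, Real.exp_zero] at this; exact this
  set S : Set ℕ := {y | |(y : ℝ) - l| ≤ δ * l} with hS
  have hsplit := hp.summable.tsum_subtype_add_tsum_subtype_compl S
  rw [hp.tsum_eq] at hsplit
  -- define tilted functions
  set t₁ := Real.log (1 + δ) with ht₁def
  set t₂ := Real.log (1 - δ) with ht₂def
  set f : ℕ → ℝ := fun y =>
    Real.exp (-(t₁ * ((1 + δ) * l))) * (Real.exp (-l) * (l * (1 + δ)) ^ y / Nat.factorial y)
    with hfdef
  set g : ℕ → ℝ := fun y =>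
    Real.exp (-(t₂ * ((1 - δ) * l))) * (Real.exp (-l) * (l * (1 - δ)) ^ y / Nat.factorial y)
    with hgdef
  have hf : HasSum f (Real.exp (-(t₁ * ((1 + δ) * l))) * Real.exp (l * (1 + δ) - l)) :=
    (hasSum_aux l (l * (1 + δ))).mul_left _
  have hg : HasSum g (Real.exp (-(t₂ * ((1 - δ) * l))) * Real.exp (l * (1 - δ) - l)) :=
    (hasSum_aux l (l * (1 - δ))).mul_left _
  have hfE : Real.exp (-(t₁ * ((1 + δ) * l))) * Real.exp (l * (1 + δ) - l) ≤ E := by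
    rw [← Real.exp_add, hE, Real.exp_le_exp]
    have hB := lemB hδ0 hδ1
    nlinarith [mul_le_mul_of_nonneg_left hB hl]
  have hgE : Real.exp (-(t₂ * ((1 - δ) * l))) * Real.exp (l * (1 - δ) - l) ≤ E := by
    rw [← Real.exp_add, hE, Real.exp_le_exp]
    have hC := lemC hδ0 hδ1
    nlinarith [mul_le_mul_of_nonneg_left hC hl]
  have hg0 : ∀ y : ℕ, 0 ≤ g y := by
    intro y
    apply mul_nonneg (Real.exp_pos _).le
    apply div_nonneg _ (Nat.cast_nonneg _)
    exact mul_nonneg (Real.exp_pos _).le (pow_nonneg (by nlinarith) y)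
  have hf0 : ∀ y : ℕ, 0 ≤ f y := by
    intro y
    apply mul_nonneg (Real.exp_pos _).le
    apply div_nonneg _ (Nat.cast_nonneg _)
    exact mul_nonneg (Real.exp_pos _).le (pow_nonneg (by nlinarith) y)
  have hp0 : ∀ y : ℕ, 0 ≤ poissonPMF l y := by
    intro y
    apply div_nonneg _ (Nat.cast_nonneg _)
    exact mul_nonneg (Real.exp_pos _).le (pow_nonneg hl y)
  -- pointwise bound on the complement
  have pointwise : ∀ y : ℕ, y ∈ Sᶜ → poissonPMF l y ≤ f y + g y := by
    intro y hy
    have hy' : δ * l < |(y : ℝ) - l| := by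
      simpa [hS, not_le] using hy
    rcases lt_abs.mp hy' with hA | hB
    · -- upper tail: (1+δ)l < y
      have hAy : (1 + δ) * l < (y : ℝ) := by linarith
      have h1δ : (0 : ℝ) < 1 + δ := by linarith
      have hexp1 : Real.exp t₁ = 1 + δ := Real.exp_log h1δ
      have ht₁0 : 0 ≤ t₁ := Real.log_nonneg (by linarith)
      have hpow : (l * (1 + δ)) ^ y = l ^ y * Real.exp (t₁ * (y : ℝ)) := by
        rw [mul_pow, ← hexp1, mul_comm t₁ ((y : ℝ)), ← Real.exp_nat_mul]
      have hfact : (1 : ℝ) ≤ Real.exp (t₁ * (y : ℝ)) * Real.exp (-(t₁ * ((1 + δ) * l))) := by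
        rw [← Real.exp_add]
        apply Real.one_le_exp
        have := mul_le_mul_of_nonneg_left hAy.le ht₁0
        linarith
      have key : poissonPMF l y ≤ f y := by
        have hnn : (0 : ℝ) ≤ Real.exp (-l) * l ^ y / Nat.factorial y := hp0 y
        calc poissonPMF l y = (Real.exp (-l) * l ^ y / Nat.factorial y) * 1 := by
              simp [poissonPMF]
          _ ≤ (Real.exp (-l) * l ^ y / Nat.factorial y) *
              (Real.exp (t₁ * (y : ℝ)) * Real.exp (-(t₁ * ((1 + δ) * l)))) :=
              mul_le_mul_of_nonneg_left hfact hnn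
          _ = f y := by rw [hfdef]; simp only [hpow]; ring
      linarith [hg0 y]
    · -- lower tail: y < (1-δ)l
      have hBy : (y : ℝ) < (1 - δ) * l := by linarith
      have hpos : (0 : ℝ) < (1 - δ) * l := lt_of_le_of_lt (Nat.cast_nonneg y) hBy
      have h1δ : (0 : ℝ) < 1 - δ := by nlinarith
      have hexp2 : Real.exp t₂ = 1 - δ := Real.exp_log h1δ
      have ht₂0 : t₂ ≤ 0 := Real.log_nonpos (by linarith) (by linarith)
      have hpow : (l * (1 - δ)) ^ y = l ^ y * Real.exp (t₂ * (y : ℝ)) := by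
        rw [mul_pow, ← hexp2, mul_comm t₂ ((y : ℝ)), ← Real.exp_nat_mul]
      have hfact : (1 : ℝ) ≤ Real.exp (t₂ * (y : ℝ)) * Real.exp (-(t₂ * ((1 - δ) * l))) := by
        rw [← Real.exp_add]
        apply Real.one_le_exp
        have := mul_le_mul_of_nonpos_left hBy.le ht₂0
        linarith
      have key : poissonPMF l y ≤ g y := by
        have hnn : (0 : ℝ) ≤ Real.exp (-l) * l ^ y / Nat.factorial y := hp0 y
        calc poissonPMF l y = (Real.exp (-l) * l ^ y / Nat.factorial y) * 1 := by
              simp [poissonPMF]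
          _ ≤ (Real.exp (-l) * l ^ y / Nat.factorial y) *
              (Real.exp (t₂ * (y : ℝ)) * Real.exp (-(t₂ * ((1 - δ) * l)))) :=
              mul_le_mul_of_nonneg_left hfact hnn
          _ = g y := by rw [hgdef]; simp only [hpow]; ring
      linarith [hf0 y]
  -- bound the tail sum
  have tail : (∑' y : ↥(Sᶜ), poissonPMF l ↑y) ≤ 2 * E := by
    have hfg : Summable (fun y : ℕ => f y + g y) := hf.summable.add hg.summable
    have step1 : (∑' y : ↥(Sᶜ), poissonPMF l ↑y) ≤ ∑' y : ↥(Sᶜ), (f ↑y + g ↑y) :=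
      Summable.tsum_le_tsum (fun y => pointwise ↑y y.2) (hp.summable.subtype _) (hfg.subtype _)
    have step2 : (∑' y : ↥(Sᶜ), (f ↑y + g ↑y)) ≤ ∑' y : ℕ, (f y + g y) :=
      Summable.tsum_le_tsum_of_inj (Subtype.val) Subtype.val_injective
        (fun c _ => add_nonneg (hf0 c) (hg0 c)) (fun _ => le_rfl) (hfg.subtype _) hfg
    have step3 : (∑' y : ℕ, (f y + g y)) ≤ 2 * E := by
      rw [Summable.tsum_add hf.summable hg.summable, hf.tsum_eq, hg.tsum_eq]
      linarith
    linarith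
  have hgoal : (∑' y : ↥S, poissonPMF l ↑y) = 1 - ∑' y : ↥(Sᶜ), poissonPMF l ↑y := by
    linarith
  show 1 - 2 * E ≤ ∑' y : ↥S, poissonPMF l ↑y
  rw [hgoal]
  linarith
end

section
/- Let λ ≥ 0 and x ≥ 0 with λ + x > 0, let q > 0 and y₀ > 0, and let h : ℕ → ℝ be such that Y(y) = y₀·e^{h(y)}·(q/e)^y / y! defines a probability distribution on ℕ and Σ_{y=0}^∞ Poi_{λ+x}(y)·|h(y)| < ∞. Then D_KL(Poi_{λ+x} ‖ Y) = −log y₀ − (λ+x)·log q + (λ+x)·log(λ+x) − e^{−(λ+x)}·G(λ+x), where G(z) = Σ_{i=0}^∞ h(i)·z^i / i! is the exponential generating function of h. -/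
/-- Kullback–Leibler divergence between distributions on ℕ given by pmfs:
`D_KL(P‖Q) = Σ_y P(y)·log(P(y)/Q(y))`. -/
noncomputable def klDivPMF (P Q : ℕ → ℝ) : ℝ := ∑' y : ℕ, P y * Real.log (P y / Q y)

/-- Let `λ ≥ 0`, `x ≥ 0` with `λ + x > 0`, let `q > 0` and `y₀ > 0`, and let `h : ℕ → ℝ` be
such that `Y(y) = y₀·e^{h(y)}·(q/e)^y / y!` defines a probability distribution on ℕ and
`Σ_y Poi_{λ+x}(y)·|h(y)| < ∞`. Then
`D_KL(Poi_{λ+x} ‖ Y) = −log y₀ − (λ+x)·log q + (λ+x)·log(λ+x) − e^{−(λ+x)}·G(λ+x)`,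
where `G(z) = Σ_i h(i)·z^i / i!`. -/
theorem stmt13 (lam x q y0 : ℝ) (hlam : 0 ≤ lam) (hx : 0 ≤ x) (hpos : 0 < lam + x)
    (hq : 0 < q) (hy0 : 0 < y0) (h : ℕ → ℝ) (Y : ℕ → ℝ)
    (hY : ∀ y : ℕ, Y y = y0 * Real.exp (h y) * (q / Real.exp 1) ^ y / Nat.factorial y)
    (hprob : ∑' y : ℕ, Y y = 1)
    (hsum : Summable fun y : ℕ => poissonPMF (lam + x) y * |h y|) :
    klDivPMF (poissonPMF (lam + x)) Y =
      -Real.log y0 - (lam + x) * Real.log q + (lam + x) * Real.log (lam + x) -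
        Real.exp (-(lam + x)) * ∑' i : ℕ, h i * (lam + x) ^ i / Nat.factorial i := by
  set m := lam + x with hm
  have hm0 : (0:ℝ) < m := hpos
  have hfac : ∀ y : ℕ, (0:ℝ) < (Nat.factorial y : ℝ) := fun y => by
    exact_mod_cast Nat.factorial_pos y
  have hPpos : ∀ y : ℕ, 0 < poissonPMF m y := fun y => by
    unfold poissonPMF; positivity
  have hYpos : ∀ y : ℕ, 0 < Y y := fun y => by
    rw [hY]; positivity
  -- pointwise rewrite of the summand
  have hlog : ∀ y : ℕ, poissonPMF m y * Real.log (poissonPMF m y / Y y)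
      = (-m - Real.log y0) * poissonPMF m y - poissonPMF m y * h y
        + (Real.log m - Real.log q + 1) * ((y : ℝ) * poissonPMF m y) := by
    intro y
    have h1 : Real.log (poissonPMF m y / Y y)
        = (-m - Real.log y0) - h y + (y : ℝ) * (Real.log m - Real.log q + 1) := by
      rw [Real.log_div (hPpos y).ne' (hYpos y).ne', hY]
      unfold poissonPMF
      rw [Real.log_div (by positivity) (hfac y).ne',
          Real.log_div (by positivity) (hfac y).ne',
          Real.log_mul (Real.exp_pos _).ne' (by positivity),
          Real.log_mul (by positivity) (by positivity),
          Real.log_mul hy0.ne' (Real.exp_pos _).ne',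
          Real.log_pow, Real.log_pow, Real.log_exp, Real.log_exp,
          Real.log_div hq.ne' (Real.exp_pos 1).ne', Real.log_exp]
      ring
    rw [h1]; ring
  -- summability facts
  have hexp : Summable fun y : ℕ => m ^ y / (Nat.factorial y : ℝ) :=
    Real.summable_pow_div_factorial m
  have hPeq : ∀ y : ℕ, poissonPMF m y = Real.exp (-m) * (m ^ y / Nat.factorial y) := by
    intro y; unfold poissonPMF; ring
  have sP : Summable (poissonPMF m) := by
    have := hexp.mul_left (Real.exp (-m))
    apply this.congr
    intro y; rw [hPeq]
  have hexpsum : Real.exp m = ∑' n : ℕ, m ^ n / (Nat.factorial n : ℝ) := by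
    rw [Real.exp_eq_exp_ℝ, NormedSpace.exp_eq_tsum_div]
  have tP : ∑' y : ℕ, poissonPMF m y = 1 := by
    calc ∑' y : ℕ, poissonPMF m y
        = Real.exp (-m) * ∑' y : ℕ, m ^ y / Nat.factorial y := by
          simp_rw [hPeq]; exact tsum_mul_left
      _ = 1 := by rw [← hexpsum, Real.exp_neg]; field_simp
  -- the mean series
  have hshift : ∀ n : ℕ, ((n+1 : ℕ) : ℝ) * poissonPMF m (n+1)
      = m * poissonPMF m n := by
    intro n
    unfold poissonPMF
    rw [Nat.factorial_succ]
    push_cast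
    have hn : ((Nat.factorial n : ℝ)) ≠ 0 := (hfac n).ne'
    field_simp
    ring
  have sN : Summable (fun y : ℕ => (y : ℝ) * poissonPMF m y) := by
    apply (summable_nat_add_iff 1).mp
    simp_rw [hshift]
    exact sP.mul_left m
  have tN : ∑' y : ℕ, (y : ℝ) * poissonPMF m y = m := by
    rw [Summable.tsum_eq_zero_add sN]
    simp_rw [hshift]
    rw [tsum_mul_left, tP]
    simp
  -- the h series
  have sH : Summable (fun y : ℕ => poissonPMF m y * h y) := by
    apply Summable.of_abs
    have : (fun y : ℕ => |poissonPMF m y * h y|) = fun y => poissonPMF m y * |h y| := by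
      funext y; rw [abs_mul, abs_of_pos (hPpos y)]
    rw [this]; exact hsum
  have sG : Summable (fun i : ℕ => h i * m ^ i / Nat.factorial i) := by
    have := sH.mul_left (Real.exp m)
    have he : (fun y : ℕ => Real.exp m * (poissonPMF m y * h y))
        = fun i => h i * m ^ i / Nat.factorial i := by
      funext y
      rw [hPeq, Real.exp_neg]
      field_simp
    rwa [he] at this
  have tH : ∑' y : ℕ, poissonPMF m y * h y
      = Real.exp (-m) * ∑' i : ℕ, h i * m ^ i / Nat.factorial i := by
    have : ∀ y : ℕ, poissonPMF m y * h y
        = Real.exp (-m) * (h y * m ^ y / Nat.factorial y) := by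
      intro y; rw [hPeq]; ring
    simp_rw [this]; exact tsum_mul_left
  -- put it together
  unfold klDivPMF
  simp_rw [hlog]
  rw [Summable.tsum_add ((sP.mul_left _).sub sH) (sN.mul_left _),
      Summable.tsum_sub (sP.mul_left _) sH, tsum_mul_left, tsum_mul_left, tP, tN, tH]
  ring
end
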